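/- arXiv:1705.00118 — 4 statements merged into one kernel-verified Lean document; each statement's English description precedes it below -/
import Mathlib

section
/- Let V be a real vector space with a symmetric bilinear form (·|·), let α, β ∈ V with (α|α) = (β|β) = 2 and (α|β) = -1 (resp. (α|β) = 1). Define X(γ) := -γ(γ|·) + (1/2)·id. Then {X(α), X(β)} = X(α+β) (resp. {X(α), X(β)} = X(α-β)). -/
/-- Coordinate-free spin-3/2 anticommutator identity: for norm-2 vectors `α, β`
with `(α|β) = ∓1` and `X(γ) = -γ(γ|·) + (1/2)·id`, one has
`{X(α), X(β)} = X(α ± β)`. -/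
theorem stmt4 {V : Type*} [AddCommGroup V] [Module ℝ V]
    (B : LinearMap.BilinForm ℝ V) (hsymm : ∀ x y, B x y = B y x)
    (α β : V) (hα : B α α = 2) (hβ : B β β = 2) :
    let X : V → Module.End ℝ V := fun γ =>
      -(LinearMap.smulRight (B γ) γ) + (1 / 2 : ℝ) • (1 : Module.End ℝ V)
    (B α β = -1 → X α * X β + X β * X α = X (α + β)) ∧
    (B α β = 1 → X α * X β + X β * X α = X (α - β)) := by
  intro X
  constructor <;> intro h <;> ext v <;>
    simp [X, Module.End.mul_apply, LinearMap.smulRight_apply, map_add, map_sub,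
      smul_smul, hsymm β α, h, hα, hβ, add_smul, sub_smul, smul_add, smul_sub] <;>
    module
end

section
/- Let V be a real vector space with a symmetric bilinear form, and for γ ∈ V with (γ|γ) = 2 let π_γ ∈ End(V) be v ↦ (γ|v)·γ. If (α|α) = (β|β) = 2 and (α|β) = -1, then on Sym²(V) (equivalently, as endomorphisms of V ⊗ V restricted to symmetric tensors) one has {X(α), X(β)} = X(α+β), where X(γ) := π_γ ⊗ π_γ - (π_γ ⊗ id + id ⊗ π_γ) + (1/2)·id ⊗ id. -/
open TensorProduct

/-- Coordinate-free spin-5/2 anticommutator identity on the symmetric square: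
for norm-2 vectors `α, β` with `(α|β) = -1`, the anticommutator
`{X(α), X(β)}` agrees with `X(α+β)` on all symmetric tensors (the span of
the elements `h ⊗ h`). -/
theorem stmt6 {V : Type*} [AddCommGroup V] [Module ℝ V]
    (B : LinearMap.BilinForm ℝ V) (hsymm : ∀ x y, B x y = B y x)
    (α β : V) (hα : B α α = 2) (hβ : B β β = 2) (hαβ : B α β = -1) :
    let π : V → Module.End ℝ V := fun γ => LinearMap.smulRight (B γ) γ
    let X : V → Module.End ℝ (V ⊗[ℝ] V) := fun γ =>
      TensorProduct.map (π γ) (π γ)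
        - (TensorProduct.map (π γ) 1 + TensorProduct.map 1 (π γ))
        + (1 / 2 : ℝ) • (1 : Module.End ℝ (V ⊗[ℝ] V))
    ∀ z ∈ Submodule.span ℝ {x : V ⊗[ℝ] V | ∃ h : V, x = h ⊗ₜ[ℝ] h},
      (X α * X β + X β * X α) z = X (α + β) z := by
  intro π X z hz
  have hβα : B β α = -1 := by rw [hsymm]; exact hαβ
  induction hz using Submodule.span_induction with
  | mem x hx =>
    obtain ⟨h, rfl⟩ := hx
    simp only [X, π, Module.End.mul_apply, LinearMap.add_apply, LinearMap.sub_apply,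
      LinearMap.smul_apply, Module.End.one_apply, TensorProduct.map_tmul,
      LinearMap.smulRight_apply, Module.End.one_apply, map_add, map_sub, map_smul,
      LinearMap.add_apply, tmul_add, add_tmul, tmul_smul, ← smul_tmul', smul_smul,
      hα, hβ, hαβ, hβα, smul_add]
    module
  | zero => simp
  | add x y _ _ hx hy => simp_all [map_add]
  | smul c x _ hx => simp_all [map_smul]
end

section
/- Let ρ: Sym₃ → GL(V) be a finite-dimensional representation of the symmetric group on 3 letters over ℝ, and let s, t be two distinct transpositions. Then ρ(sts) - ρ(st) - ρ(ts) + ρ(s) + ρ(t) - id = 0 holds if and only if ρ does not contain the sign representation as an irreducible component. -/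
/-- For a finite-dimensional real representation `ρ` of `Sym₃` and distinct
transpositions `s, t`, the identity `ρ(sts) - ρ(st) - ρ(ts) + ρ(s) + ρ(t) - id = 0`
holds iff `ρ` does not contain the sign representation as an irreducible
component. -/
theorem stmt11 {V : Type*} [AddCommGroup V] [Module ℝ V] [FiniteDimensional ℝ V]
    (ρ : Representation ℝ (Equiv.Perm (Fin 3)) V)
    (s t : Equiv.Perm (Fin 3)) (hs : s.IsSwap) (ht : t.IsSwap) (hst : s ≠ t) :
    ρ (s * t * s) - ρ (s * t) - ρ (t * s) + ρ s + ρ t - 1 = 0 ↔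
      ¬ ∃ v : V, v ≠ 0 ∧ ∀ g, ρ g v = ((Equiv.Perm.sign g : ℤ) : ℝ) • v := by
  have hcase : ∀ u : Equiv.Perm (Fin 3), u.IsSwap →
      u = Equiv.swap 0 1 ∨ u = Equiv.swap 0 2 ∨ u = Equiv.swap 1 2 := by
    rintro u ⟨x, y, hxy, rfl⟩
    revert hxy; revert x y; decide
  have hs' := hcase s hs
  have ht' := hcase t ht
  clear hcase
  have hrel : s * (s * t * s) = t * s ∧ s * (s * t) = t ∧ s * (t * s) = s * t * s ∧
      s * s = 1 ∧ t * (s * t * s) = s * t ∧ t * (s * t) = s * t * s ∧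
      t * (t * s) = s ∧ t * t = 1 := by
    clear hs ht
    revert hst; revert hs' ht'; revert s t; decide
  have hall : ∀ g : Equiv.Perm (Fin 3),
      g = 1 ∨ g = s ∨ g = t ∨ g = s * t ∨ g = t * s ∨ g = s * t * s := by
    clear hrel hs ht
    revert hst; revert hs' ht'; revert s t; decide
  obtain ⟨r1, r2, r3, r4, r5, r6, r7, r8⟩ := hrel
  have hsgns : ((Equiv.Perm.sign s : ℤ) : ℝ) = -1 := by
    obtain ⟨x, y, hxy, rfl⟩ := hs
    simp [Equiv.Perm.sign_swap hxy]
  have hsgnt : ((Equiv.Perm.sign t : ℤ) : ℝ) = -1 := by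
    obtain ⟨x, y, hxy, rfl⟩ := ht
    simp [Equiv.Perm.sign_swap hxy]
  have comp : ∀ (g h : Equiv.Perm (Fin 3)) (u : V), ρ g (ρ h u) = ρ (g * h) u := by
    intro g h u; rw [map_mul]; rfl
  constructor
  · rintro hT ⟨v, hv, hsgn⟩
    apply hv
    have h0 : (ρ (s*t*s) - ρ (s*t) - ρ (t*s) + ρ s + ρ t - 1) v = 0 := by rw [hT]; rfl
    simp only [LinearMap.sub_apply, LinearMap.add_apply, Module.End.one_apply] at h0
    rw [hsgn (s*t*s), hsgn (s*t), hsgn (t*s), hsgn s, hsgn t] at h0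
    simp only [map_mul, Units.val_mul, Int.cast_mul] at h0
    rw [hsgns, hsgnt] at h0
    have h6 : (-6 : ℝ) • v = 0 := by
      linear_combination (norm := module) h0
    rcases smul_eq_zero.mp h6 with h | h
    · norm_num at h
    · exact h
  · intro hns
    ext v
    simp only [LinearMap.zero_apply]
    by_contra hv
    apply hns
    set w : V := (ρ (s*t*s) - ρ (s*t) - ρ (t*s) + ρ s + ρ t - 1) v with hw
    have hwv : w = ρ (s*t*s) v - ρ (s*t) v - ρ (t*s) v + ρ s v + ρ t v - v := by
      simp [hw]
    refine ⟨w, hv, ?_⟩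
    have hsw : ρ s w = -w := by
      rw [hwv]
      simp only [map_sub, map_add, comp, r1, r2, r3, r4]
      simp only [map_one, Module.End.one_apply]
      abel
    have htw : ρ t w = -w := by
      rw [hwv]
      simp only [map_sub, map_add, comp, r5, r6, r7, r8]
      simp only [map_one, Module.End.one_apply]
      abel
    intro g
    rcases hall g with rfl | rfl | rfl | rfl | rfl | rfl
    · simp
    · rw [hsw, hsgns]; module
    · rw [htw, hsgnt]; module
    · rw [← comp, htw, map_neg, hsw]
      simp only [map_mul, Units.val_mul, Int.cast_mul]
      rw [hsgns, hsgnt]; module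
    · rw [← comp, hsw, map_neg, htw]
      simp only [map_mul, Units.val_mul, Int.cast_mul]
      rw [hsgns, hsgnt]; module
    · rw [← comp, ← comp, hsw, map_neg, htw, map_neg, map_neg, hsw]
      simp only [map_mul, Units.val_mul, Int.cast_mul]
      rw [hsgns, hsgnt]; module
end

section
/- Let G ∈ ℝ^{k×k} be an invertible symmetric matrix with inverse G'. For α ∈ ℝᵏ define X(α) := -(1/2)ααᵀ + (1/4)G'. If αᵀGα = βᵀGβ = 2 and αᵀGβ = ∓1, then X(α)·G·X(β) + X(β)·G·X(α) = (1/2)·X(α ± β). -/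
open Matrix

private lemma vmv_mul {k : ℕ} (G : Matrix (Fin k) (Fin k) ℝ) (a b c d : Fin k → ℝ) :
    vecMulVec a b * G * vecMulVec c d = (b ⬝ᵥ G.mulVec c) • vecMulVec a d := by
  ext i j
  simp [mul_apply, vecMulVec_apply, dotProduct, mulVec, Finset.mul_sum, Finset.sum_mul]
  rw [Finset.sum_comm]
  congr 1; ext x; congr 1; ext y; ring

private lemma vmv_add {k : ℕ} (a b c d : Fin k → ℝ) :
    vecMulVec (a + b) (c + d) = vecMulVec a c + vecMulVec a d + vecMulVec b c
      + vecMulVec b d := by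
  ext i j; simp [vecMulVec_apply]; ring

private lemma vmv_sub {k : ℕ} (a b c d : Fin k → ℝ) :
    vecMulVec (a - b) (c - d) = vecMulVec a c - vecMulVec a d - vecMulVec b c
      + vecMulVec b d := by
  ext i j; simp [vecMulVec_apply]; ring

/-- Coordinate form of the spin-3/2 anticommutator identity: for a symmetric
invertible Gram matrix `G` with symmetric inverse `G'`, norm-2 vectors `α, β`
with `αᵀGβ = ∓1`, and `X(γ) = -(1/2)γγᵀ + (1/4)G'`, one has
`X(α)·G·X(β) + X(β)·G·X(α) = (1/2)·X(α ± β)`. -/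
theorem stmt16 {k : ℕ} (G G' : Matrix (Fin k) (Fin k) ℝ)
    (hG : G.IsSymm) (hG' : G'.IsSymm) (h1 : G * G' = 1) (h2 : G' * G = 1)
    (α β : Fin k → ℝ)
    (hα : α ⬝ᵥ G.mulVec α = 2) (hβ : β ⬝ᵥ G.mulVec β = 2) :
    let X : (Fin k → ℝ) → Matrix (Fin k) (Fin k) ℝ := fun γ =>
      (-(1 / 2 : ℝ)) • Matrix.vecMulVec γ γ + (1 / 4 : ℝ) • G'
    (α ⬝ᵥ G.mulVec β = -1 →
      X α * G * X β + X β * G * X α = (1 / 2 : ℝ) • X (α + β)) ∧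
    (α ⬝ᵥ G.mulVec β = 1 →
      X α * G * X β + X β * G * X α = (1 / 2 : ℝ) • X (α - β)) := by
  intro X
  have hsym : β ⬝ᵥ G.mulVec α = α ⬝ᵥ G.mulVec β := by
    rw [dotProduct_mulVec, ← mulVec_transpose, hG.eq, dotProduct_comm]
  have key : ∀ γ δ : Fin k → ℝ,
      X γ * G * X δ = (1 / 4 * (γ ⬝ᵥ G.mulVec δ)) • vecMulVec γ δ
        + (-(1/8) : ℝ) • vecMulVec γ γ + (-(1/8) : ℝ) • vecMulVec δ δ
        + (1/16 : ℝ) • G' := by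
    intro γ δ
    have e1 : vecMulVec γ γ * G * vecMulVec δ δ = (γ ⬝ᵥ G.mulVec δ) • vecMulVec γ δ :=
      vmv_mul G γ γ δ δ
    have e2 : vecMulVec γ γ * G * G' = vecMulVec γ γ := by
      rw [mul_assoc, h1, mul_one]
    have e3 : G' * G * vecMulVec δ δ = vecMulVec δ δ := by
      rw [h2, one_mul]
    have e4 : G' * G * G' = G' := by rw [h2, one_mul]
    simp only [X, add_mul, mul_add, Matrix.smul_mul, Matrix.mul_smul, e1, e2, e3, e4,
      smul_smul]
    module
  have k1 := key α β
  have k2 := key β α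
  constructor <;> intro h <;>
    rw [k1, k2, hsym, h] <;> simp only [X, vmv_add, vmv_sub] <;> module
end
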